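/- arXiv:1611.00936 — 11 statements merged into one kernel-verified Lean document; each statement's English description precedes it below -/
import Mathlib

section
/- Let X₁ = Q(G, H₁, α) and X₂ = Q(G, H₂, α) be coset quandles with H₁ ≤ H₂. Then the map xH₁ ↦ xH₂ is a surjective quandle homomorphism ψ : X₁ → X₂ such that whenever ψ(xH₁) = ψ(yH₁), the left translations by xH₁ and yH₁ in X₁ coincide (i.e., X₁ is a covering of X₂). -/
/-- Coset quandles: if `H₁ ≤ H₂ ≤ Fix(α)` then the natural map
`G⧸H₁ → G⧸H₂` is a surjective quandle homomorphism which is a covering. -/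
theorem coset_quandle_covering {G : Type*} [Group G] (α : G ≃* G)
    (H₁ H₂ : Subgroup G) (hle : H₁ ≤ H₂)
    (hfix : ∀ h ∈ H₂, α h = h)
    (op₁ : G ⧸ H₁ → G ⧸ H₁ → G ⧸ H₁)
    (hop₁ : ∀ x y : G, op₁ (↑x) (↑y) = ((x * α (x⁻¹ * y) : G) : G ⧸ H₁))
    (op₂ : G ⧸ H₂ → G ⧸ H₂ → G ⧸ H₂)
    (hop₂ : ∀ x y : G, op₂ (↑x) (↑y) = ((x * α (x⁻¹ * y) : G) : G ⧸ H₂)) :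
    ∃ ψ : G ⧸ H₁ → G ⧸ H₂,
      (∀ x : G, ψ (↑x) = (↑x : G ⧸ H₂)) ∧
      Function.Surjective ψ ∧
      (∀ a b : G ⧸ H₁, ψ (op₁ a b) = op₂ (ψ a) (ψ b)) ∧
      (∀ a b : G ⧸ H₁, ψ a = ψ b → ∀ c, op₁ a c = op₁ b c) := by
  refine ⟨fun a => Quotient.liftOn' a (QuotientGroup.mk) (fun a b h =>
      QuotientGroup.eq.mpr (hle (QuotientGroup.leftRel_apply.mp h))), fun x => rfl, ?_, ?_, ?_⟩
  · intro b
    obtain ⟨x, rfl⟩ := QuotientGroup.mk_surjective b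
    exact ⟨↑x, rfl⟩
  · intro a b
    obtain ⟨x, rfl⟩ := QuotientGroup.mk_surjective a
    obtain ⟨y, rfl⟩ := QuotientGroup.mk_surjective b
    rw [hop₁]
    exact (hop₂ x y).symm ▸ rfl
  · intro a b hab c
    obtain ⟨x, rfl⟩ := QuotientGroup.mk_surjective a
    obtain ⟨y, rfl⟩ := QuotientGroup.mk_surjective b
    obtain ⟨c, rfl⟩ := QuotientGroup.mk_surjective c
    have h2 : x⁻¹ * y ∈ H₂ := QuotientGroup.eq.mp hab
    rw [hop₁, hop₁]
    congr 1
    have := hfix _ (H₂.inv_mem h2)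
    calc x * α (x⁻¹ * c)
        = x * (x⁻¹ * y) * ((x⁻¹ * y)⁻¹ * α (x⁻¹ * c)) := by group
      _ = y * α (y⁻¹ * c) := by
          rw [← this, ← map_mul]
          congr 2
          group
end

section
/- Let X be a latin quandle with distinguished element u, and let β : X × X → G be a u-normalized constant quandle cocycle with values in a group G. Then β(u/(u/x), x) = β(u/x, x) for every x ∈ X. Moreover, (u/(u/x)) ▷ x = u if and only if x = u. -/
/-- For a `u`-normalized constant cocycle on a latin quandle:
`β(u/(u/x), x) = β(u/x, x)`, and `(u/(u/x)) ▷ x = u ↔ x = u`. -/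
theorem normalized_cocycle_prop {X : Type*} {G : Type*} [Group G]
    (op : X → X → X) (rd : X → X → X) (u : X)
    (hbij : ∀ x, Function.Bijective (op x))
    (hdist : ∀ x y z, op x (op y z) = op (op x y) (op x z))
    (hidem : ∀ x, op x x = x)
    (hlatin : ∀ x, Function.Bijective (fun y => op y x))
    (hrd₁ : ∀ x y, op (rd x y) y = x)
    (hrd₂ : ∀ x y, rd (op x y) y = x)
    (β : X → X → G)
    (hcc : ∀ x y z, β (op x y) (op x z) * β x z = β x (op y z) * β y z)
    (hcq : ∀ x, β x x = 1)
    (hnorm : ∀ x, β x u = 1) :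
    ∀ x : X, β (rd u (rd u x)) x = β (rd u x) x ∧
      (op (rd u (rd u x)) x = u ↔ x = u) := by
  -- First: β(u, w) = 1 for all w.
  have hu1 : ∀ w, β u w = 1 := by
    intro w
    obtain ⟨y, hy⟩ := (hlatin u).2 w
    have h := hcc u y u
    simp only [hidem, hnorm, mul_one, one_mul] at h
    simp only at hy
    rw [hy] at h
    exact h.symm
  intro x
  have hax : op (rd u x) x = u := hrd₁ u x
  have hba : op (rd u (rd u x)) (rd u x) = u := hrd₁ u (rd u x)
  refine ⟨?_, ?_, ?_⟩
  · have key := hcc (rd u (rd u x)) (rd u x) x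
    rw [hba, hax, hnorm, hu1, one_mul, one_mul] at key
    exact key
  · intro h
    have hba' : rd u (rd u x) = rd u x := (hlatin x).1 (h.trans hax.symm)
    have hau : rd u x = u := by rw [hba', hidem] at hba; exact hba
    have hux : op u x = u := by rw [hau] at hax; exact hax
    exact (hbij u).1 (hux.trans (hidem u).symm)
  · intro h
    subst x
    have h1 : rd u u = u := (hlatin u).1 ((hrd₁ u u).trans (hidem u).symm)
    rw [h1, h1, hidem]
end

section
/- Let X be a latin quandle, u ∈ X, and define f : X × X → X × X by f(x, y) = (x ▷ (y/u), x ▷ u). Then f is a bijection, with inverse (x, y) ↦ (y/u, ((y/u)\x) ▷ u), and every u-normalized constant cocycle β satisfies β(f(x, y)) = β(x, y) for all x, y. -/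
/-- The map `f(x,y) = (x ▷ (y/u), x ▷ u)` is a bijection of `X × X`, with inverse
`(x,y) ↦ (y/u, ((y/u)\x) ▷ u)`, and every `u`-normalized constant cocycle is
`f`-invariant. -/
theorem f_bijective_and_invariance {X : Type*} {G : Type*} [Group G]
    (op : X → X → X) (ld : X → X → X) (rd : X → X → X) (u : X)
    (hbij : ∀ x, Function.Bijective (op x))
    (hdist : ∀ x y z, op x (op y z) = op (op x y) (op x z))
    (hidem : ∀ x, op x x = x)
    (hlatin : ∀ x, Function.Bijective (fun y => op y x))
    (hld₁ : ∀ x y, op x (ld x y) = y)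
    (hld₂ : ∀ x y, ld x (op x y) = y)
    (hrd₁ : ∀ x y, op (rd x y) y = x)
    (hrd₂ : ∀ x y, rd (op x y) y = x)
    (β : X → X → G)
    (hcc : ∀ x y z, β (op x y) (op x z) * β x z = β x (op y z) * β y z)
    (hcq : ∀ x, β x x = 1)
    (hnorm : ∀ x, β x u = 1) :
    Function.LeftInverse
        (fun p : X × X => (rd p.2 u, op (ld (rd p.2 u) p.1) u))
        (fun p : X × X => (op p.1 (rd p.2 u), op p.1 u)) ∧
    Function.RightInverse
        (fun p : X × X => (rd p.2 u, op (ld (rd p.2 u) p.1) u))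
        (fun p : X × X => (op p.1 (rd p.2 u), op p.1 u)) ∧
    Function.Bijective (fun p : X × X => (op p.1 (rd p.2 u), op p.1 u)) ∧
    (∀ x y : X, β (op x (rd y u)) (op x u) = β x y) := by
  have hli : Function.LeftInverse
      (fun p : X × X => (rd p.2 u, op (ld (rd p.2 u) p.1) u))
      (fun p : X × X => (op p.1 (rd p.2 u), op p.1 u)) := by
    intro p; simp [hrd₂, hld₂, hrd₁]
  have hri : Function.RightInverse
      (fun p : X × X => (rd p.2 u, op (ld (rd p.2 u) p.1) u))
      (fun p : X × X => (op p.1 (rd p.2 u), op p.1 u)) := by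
    intro p; simp [hrd₂, hld₁, hrd₁]
  refine ⟨hli, hri, ⟨hli.injective, hri.surjective⟩, ?_⟩
  intro x y
  have h := hcc x (rd y u) u
  rwa [hnorm, hnorm, hrd₁, mul_one, mul_one] at h
end

section
/- Let X be a latin quandle, u ∈ X, G a group, and β : X × X → G a constant quandle cocycle. Then β(u, x) = 1 for all x ∈ X if and only if β(u ▷ x, u ▷ y) = β(x, y) for all x, y ∈ X. -/
/-- For a constant cocycle `β` on a latin quandle: `β(u,·) = 1` iff `β` is
invariant under `g(x,y) = (u ▷ x, u ▷ y)`. -/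
theorem g_invariance_iff {X : Type*} {G : Type*} [Group G]
    (op : X → X → X) (u : X)
    (hbij : ∀ x, Function.Bijective (op x))
    (hdist : ∀ x y z, op x (op y z) = op (op x y) (op x z))
    (hidem : ∀ x, op x x = x)
    (hlatin : ∀ x, Function.Bijective (fun y => op y x))
    (β : X → X → G)
    (hcc : ∀ x y z, β (op x y) (op x z) * β x z = β x (op y z) * β y z)
    (hcq : ∀ x, β x x = 1) :
    (∀ x : X, β u x = 1) ↔ (∀ x y : X, β (op u x) (op u y) = β x y) := by
  constructor
  · intro h x y
    have := hcc u x y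
    rw [h y, h (op x y), mul_one, one_mul] at this
    exact this
  · intro h x
    obtain ⟨y, hy⟩ := (hlatin u).2 x
    simp only at hy
    have key := hcc u y u
    rw [h y u, hcq u, mul_one, hy] at key
    have h1 : (1 : G) * β y u = β u x * β y u := by rw [one_mul, ← key]
    exact (mul_right_cancel h1).symm
end

section
/- Let X be a latin quandle, u ∈ X, and β a u-normalized constant quandle cocycle with values in a group G. Then β(u ▷ x, u ▷ y) = β(x, y) for all x, y ∈ X (β is invariant under g(x, y) = (u ▷ x, u ▷ y)). -/
/-- Every `u`-normalized constant cocycle on a latin quandle is `g`-invariant,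
where `g(x,y) = (u ▷ x, u ▷ y)`. -/
theorem g_invariance {X : Type*} {G : Type*} [Group G]
    (op : X → X → X) (u : X)
    (hbij : ∀ x, Function.Bijective (op x))
    (hdist : ∀ x y z, op x (op y z) = op (op x y) (op x z))
    (hidem : ∀ x, op x x = x)
    (hlatin : ∀ x, Function.Bijective (fun y => op y x))
    (β : X → X → G)
    (hcc : ∀ x y z, β (op x y) (op x z) * β x z = β x (op y z) * β y z)
    (hcq : ∀ x, β x x = 1)
    (hnorm : ∀ x, β x u = 1) :
    ∀ x y : X, β (op u x) (op u y) = β x y := by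
  -- First: β u z = 1 for all z
  have hu : ∀ z, β u z = 1 := by
    intro z
    obtain ⟨y, hy⟩ := (hlatin u).2 z
    simp only at hy
    have h := hcc u y u
    rw [hnorm u, mul_one, hidem u, hnorm (op u y), hnorm y, mul_one] at h
    rw [← hy, ← h]
  intro x y
  have h := hcc u x y
  rw [hu y, mul_one, hu (op x y), one_mul] at h
  exact h
end

section
/- Let X be a latin quandle and u ∈ X. Define h : X × X → X × X by h(x, y) = ((y/(x\u)) ▷ x, y). Then h is a bijection with inverse k(x, y) = (u/(((x ▷ y)/u)\y), y), and every u-normalized constant cocycle β satisfies β(h(x, y)) = β(x, y) for all x, y. -/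
/-- The map `h(x,y) = ((y/(x\u)) ▷ x, y)` is a bijection of `X × X` with inverse
`k(x,y) = (u/(((x ▷ y)/u)\y), y)`, and every `u`-normalized constant cocycle is
`h`-invariant. -/
theorem h_bijective_and_invariance {X : Type*} {G : Type*} [Group G]
    (op : X → X → X) (ld : X → X → X) (rd : X → X → X) (u : X)
    (hbij : ∀ x, Function.Bijective (op x))
    (hdist : ∀ x y z, op x (op y z) = op (op x y) (op x z))
    (hidem : ∀ x, op x x = x)
    (hlatin : ∀ x, Function.Bijective (fun y => op y x))
    (hld₁ : ∀ x y, op x (ld x y) = y)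
    (hld₂ : ∀ x y, ld x (op x y) = y)
    (hrd₁ : ∀ x y, op (rd x y) y = x)
    (hrd₂ : ∀ x y, rd (op x y) y = x)
    (β : X → X → G)
    (hcc : ∀ x y z, β (op x y) (op x z) * β x z = β x (op y z) * β y z)
    (hcq : ∀ x, β x x = 1)
    (hnorm : ∀ x, β x u = 1) :
    Function.LeftInverse
        (fun p : X × X => (rd u (ld (rd (op p.1 p.2) u) p.2), p.2))
        (fun p : X × X => (op (rd p.2 (ld p.1 u)) p.1, p.2)) ∧
    Function.RightInverse
        (fun p : X × X => (rd u (ld (rd (op p.1 p.2) u) p.2), p.2))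
        (fun p : X × X => (op (rd p.2 (ld p.1 u)) p.1, p.2)) ∧
    Function.Bijective (fun p : X × X => (op (rd p.2 (ld p.1 u)) p.1, p.2)) ∧
    (∀ x y : X, β (op (rd y (ld x u)) x) y = β x y) := by
  have hleft : Function.LeftInverse
      (fun p : X × X => (rd u (ld (rd (op p.1 p.2) u) p.2), p.2))
      (fun p : X × X => (op (rd p.2 (ld p.1 u)) p.1, p.2)) := by
    rintro ⟨x, y⟩
    simp only
    set a := rd y (ld x u) with ha
    have h1 : op a (ld x u) = y := hrd₁ y (ld x u)
    have h2 : op (op a x) y = op a u := by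
      rw [← h1, ← hdist, hld₁]
    have h3 : rd (op (op a x) y) u = a := by rw [h2, hrd₂]
    have h4 : ld (rd (op (op a x) y) u) y = ld x u := by
      rw [h3, ← h1, hld₂]
    have h5 : rd u (ld x u) = x := by
      have h := hrd₂ x (ld x u)
      rwa [hld₁] at h
    rw [h4, h5]
  have hright : Function.RightInverse
      (fun p : X × X => (rd u (ld (rd (op p.1 p.2) u) p.2), p.2))
      (fun p : X × X => (op (rd p.2 (ld p.1 u)) p.1, p.2)) := by
    rintro ⟨x, y⟩
    simp only
    set c := rd (op x y) u with hcdef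
    set w := rd u (ld c y) with hwdef
    have hc : op c u = op x y := hrd₁ (op x y) u
    have hw : op w (ld c y) = u := hrd₁ u (ld c y)
    have ldwu : ld w u = ld c y := by rw [← hw, hld₂]
    have hy : op c (ld c y) = y := hld₁ c y
    have hrdy : rd y (ld w u) = c := by
      have h := hrd₂ c (ld c y)
      rw [hy] at h
      rw [ldwu, h]
    have key : op (op c w) y = op x y := by
      calc op (op c w) y = op (op c w) (op c (ld c y)) := by rw [hy]
        _ = op c (op w (ld c y)) := by rw [← hdist]
        _ = op x y := by rw [hw, hc]
    have hcw : op c w = x := (hlatin y).1 key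
    rw [hrdy, hcw]
  refine ⟨hleft, hright, ⟨hleft.injective, hright.surjective⟩, ?_⟩
  intro x y
  set a := rd y (ld x u) with ha
  set z := ld x u with hz
  have hy : op a z = y := hrd₁ y z
  have e1 : β x (op a z) * β a z = β x z := by
    have h := hcc x a z
    rw [show op x z = u from hld₁ x u, hnorm, one_mul] at h
    exact h.symm
  have e2 : β (op a x) (op a z) * β a z = β x z := by
    have h := hcc a x z
    rw [show op x z = u from hld₁ x u, hnorm, one_mul] at h
    exact h
  have := mul_right_cancel (e2.trans e1.symm)
  rw [hy] at this
  exact this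
end

section
/- Let X be a latin quandle, u ∈ X, and define f(x, y) = (x ▷ (y/u), x ▷ u). Then f²(x, y) = (x, y) implies f(x, y) = (x, y); that is, no orbit of f on X × X has size exactly 2. Moreover f(x, y) = (x, y) if and only if y = x ▷ u. -/
/-- For `f(x,y) = (x ▷ (y/u), x ▷ u)` on a latin quandle: `f²(p) = p` implies
`f(p) = p` (no orbit of size exactly 2), and `f(x,y) = (x,y) ↔ y = x ▷ u`. -/
theorem f_orbit_sizes {X : Type*} (op : X → X → X) (rd : X → X → X) (u : X)
    (hbij : ∀ x, Function.Bijective (op x))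
    (hdist : ∀ x y z, op x (op y z) = op (op x y) (op x z))
    (hidem : ∀ x, op x x = x)
    (hlatin : ∀ x, Function.Bijective (fun y => op y x))
    (hrd₁ : ∀ x y, op (rd x y) y = x)
    (hrd₂ : ∀ x y, rd (op x y) y = x) :
    ∀ x y : X,
      ((fun p : X × X => (op p.1 (rd p.2 u), op p.1 u))
        ((fun p : X × X => (op p.1 (rd p.2 u), op p.1 u)) (x, y)) = (x, y) →
        (fun p : X × X => (op p.1 (rd p.2 u), op p.1 u)) (x, y) = (x, y)) ∧
      ((fun p : X × X => (op p.1 (rd p.2 u), op p.1 u)) (x, y) = (x, y) ↔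
        y = op x u) := by
  intro x y
  have key : ∀ y : X, y = op x u → (op x (rd y u), op x u) = (x, y) := by
    intro y hy
    subst hy
    rw [hrd₂, hidem]
  constructor
  · intro h
    simp only [Prod.mk.injEq] at h
    obtain ⟨h1, h2⟩ := h
    rw [hrd₂ x u] at h1
    have ha : op x (rd y u) = x := by
      apply (hlatin x).injective
      show op _ x = op x x
      rw [h1, hidem]
    have hb : rd y u = x := by
      apply (hbij x).injective
      rw [ha, hidem]
    have hy : y = op x u := by rw [← hrd₁ y u, hb]
    exact key y hy
  · constructor
    · intro h
      simp only [Prod.mk.injEq] at h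
      obtain ⟨h1, h2⟩ := h
      exact h2.symm
    · intro hy
      exact key y hy
end

section
/- Let X be a latin quandle and u ∈ X. Define f(x, y) = (x ▷ (y/u), x ▷ u), g(x, y) = (u ▷ x, u ▷ y), and h(x, y) = ((y/(x\u)) ▷ x, y) on X × X. Then f ∘ g = g ∘ f and h ∘ g = g ∘ h. -/
/-- On a latin quandle, the maps `f(x,y) = (x ▷ (y/u), x ▷ u)` and
`h(x,y) = ((y/(x\u)) ▷ x, y)` commute with `g(x,y) = (u ▷ x, u ▷ y)`. -/
theorem fg_gf_hg_gh {X : Type*} (op : X → X → X)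
    (ld : X → X → X) (rd : X → X → X) (u : X)
    (hbij : ∀ x, Function.Bijective (op x))
    (hdist : ∀ x y z, op x (op y z) = op (op x y) (op x z))
    (hidem : ∀ x, op x x = x)
    (hlatin : ∀ x, Function.Bijective (fun y => op y x))
    (hld₁ : ∀ x y, op x (ld x y) = y)
    (hld₂ : ∀ x y, ld x (op x y) = y)
    (hrd₁ : ∀ x y, op (rd x y) y = x)
    (hrd₂ : ∀ x y, rd (op x y) y = x) :
    ((fun p : X × X => (op p.1 (rd p.2 u), op p.1 u)) ∘
      (fun p : X × X => (op u p.1, op u p.2)) =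
        (fun p : X × X => (op u p.1, op u p.2)) ∘
          (fun p : X × X => (op p.1 (rd p.2 u), op p.1 u))) ∧
    ((fun p : X × X => (op (rd p.2 (ld p.1 u)) p.1, p.2)) ∘
      (fun p : X × X => (op u p.1, op u p.2)) =
        (fun p : X × X => (op u p.1, op u p.2)) ∘
          (fun p : X × X => (op (rd p.2 (ld p.1 u)) p.1, p.2))) := by
  have hrdu : ∀ a b, rd (op u a) (op u b) = op u (rd a b) := by
    intro a b
    have h : op u a = op (op u (rd a b)) (op u b) := by rw [← hdist, hrd₁]
    rw [h, hrd₂]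
  have hldu : ∀ a b, ld (op u a) (op u b) = op u (ld a b) := by
    intro a b
    have h : op u b = op (op u a) (op u (ld a b)) := by rw [← hdist, hld₁]
    rw [h, hld₂]
  constructor <;> funext p <;> obtain ⟨x, y⟩ := p <;>
    simp only [Function.comp_apply]
  · have h1 : rd (op u y) u = op u (rd y u) := by
      have := hrdu y u; rwa [hidem] at this
    have h2 : op (op u x) u = op u (op x u) := by
      rw [hdist, hidem]
    rw [h1, h2, ← hdist]
  · have h1 : ld (op u x) u = op u (ld x u) := by
      have := hldu x u; rwa [hidem] at this
    rw [h1, hrdu, ← hdist]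
end

section
/- Let X = Q(A, α) be a connected affine quandle and β a 0-normalized constant quandle cocycle with values in a group G. Then β(n·y + x, y) = β(x, y) for every integer n and all x, y ∈ A; in particular β(n·x, x) = 1 for every integer n and all x ∈ A. -/
/-- On a connected affine quandle `Q(A, α)` with `op x y = (1-α)(x) + α(y)`,
every `0`-normalized constant cocycle `β` satisfies `β(n·y + x, y) = β(x, y)`
for every integer `n`; in particular `β(n·x, x) = 1`. -/
theorem affine_normalized_cocycle_translation {A : Type*} [AddCommGroup A]
    {G : Type*} [Group G] (α : A ≃+ A)
    (hconn : Function.Bijective (fun x : A => x - α x))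
    (β : A → A → G)
    (hcc : ∀ x y z : A,
      β (x - α x + α y) (x - α x + α z) * β x z =
        β x (y - α y + α z) * β y z)
    (hcq : ∀ x : A, β x x = 1)
    (hnorm : ∀ x : A, β x 0 = 1) :
    (∀ (n : ℤ) (x y : A), β (n • y + x) y = β x y) ∧
    (∀ (n : ℤ) (x : A), β (n • x) x = 1) := by
  have fsurj : Function.Surjective (fun x : A => x - α x) := hconn.surjective
  have hβ0 : ∀ q : A, β 0 q = 1 := by
    intro q
    obtain ⟨y, hy⟩ := fsurj q
    have h := hcc 0 y 0
    simp only [map_zero, sub_zero, zero_sub, add_zero, zero_add, neg_zero, hnorm, one_mul,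
      mul_one] at h
    rw [← hy]
    exact h.symm
  have key : ∀ x y : A, β (y + x) y = β x y := by
    intro v y
    obtain ⟨u, hu⟩ := fsurj y
    simp only at hu
    subst hu
    have hαc : α (α.symm (-v)) = -v := α.apply_symm_apply _
    have h1 := hcc (u + v) v (α.symm (-v) + v)
    have h2 := hcc v (u + v) (α.symm (-v) + v)
    simp only [map_add, hαc] at h1 h2
    abel_nf at h1 h2 ⊢
    rw [hnorm, one_mul] at h1 h2
    exact mul_right_cancel (h1.trans h2)
  have part1 : ∀ (n : ℤ) (x y : A), β (n • y + x) y = β x y := by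
    intro n
    induction n using Int.induction_on with
    | zero => intro x y; rw [zero_zsmul, zero_add]
    | succ n ih =>
        intro x y
        have : ((n : ℤ) + 1) • y + x = y + ((n : ℤ) • y + x) := by
          rw [add_zsmul, one_zsmul]; abel
        rw [this, key, ih]
    | pred n ih =>
        intro x y
        have h := key ((-(n : ℤ) - 1) • y + x) y
        have e : y + ((-(n : ℤ) - 1) • y + x) = (-(n : ℤ)) • y + x := by
          rw [sub_zsmul, one_zsmul]; abel
        rw [e, ih] at h
        exact h.symm
  refine ⟨part1, fun n x => ?_⟩
  have := part1 n 0 x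
  rw [add_zero] at this
  rw [this, hβ0]
end

section
/- Let X = Q(Z_m, λ_n) be a connected affine quandle over the cyclic group Z_m, where λ_n(x) = n·x with gcd(m, n) = gcd(m, n−1) = 1. Then every 0-normalized constant quandle cocycle β : X × X → G with values in any group G is identically 1. Consequently H²_c(X, G) is trivial for every group G. -/
/-- An "affine" permutation of `ZMod m × G`: translate the first coordinate by `t`
and multiply the second coordinate on the left by a label depending on the first. -/
private def aff {m : ℕ} {G : Type*} [Group G] (t : ZMod m) (lam : ZMod m → G) :
    Equiv.Perm (ZMod m × G) where
  toFun p := (p.1 + t, lam p.1 * p.2)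
  invFun p := (p.1 - t, (lam (p.1 - t))⁻¹ * p.2)
  left_inv p := by simp
  right_inv p := by simp

private def theta {m : ℕ} {G : Type*} [Group G] (c ci : ZMod m)
    (β : ZMod m → ZMod m → G) (a : ZMod m) : Equiv.Perm (ZMod m × G) :=
  aff ((1 - c) * a) (fun z => β a (ci * z))

private theorem theta_apply {m : ℕ} {G : Type*} [Group G] (c ci : ZMod m)
    (β : ZMod m → ZMod m → G) (a : ZMod m) (p : ZMod m × G) :
    theta c ci β a p = (p.1 + (1 - c) * a, β a (ci * p.1) * p.2) := rfl

private theorem part1 {m : ℕ} (hm : 0 < m) (c : ZMod m)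
    (hc : IsUnit c) (hc1 : IsUnit (c - 1)) {G : Type*} [Group G]
    (β : ZMod m → ZMod m → G)
    (hcoc : ∀ x y z : ZMod m,
        β ((1 - c) * x + c * y) ((1 - c) * x + c * z) * β x z =
          β x ((1 - c) * y + c * z) * β y z)
    (hnorm : ∀ x, β x 0 = 1) :
    ∀ x y, β x y = 1 := by
  haveI : NeZero m := ⟨hm.ne'⟩
  have hval : ∀ a : ZMod m, ((a.val : ℕ) : ZMod m) = a := fun a => by
    rw [ZMod.natCast_val, ZMod.cast_id]
  obtain ⟨cu, hcu⟩ := hc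
  set ci : ZMod m := ((cu⁻¹ : (ZMod m)ˣ) : ZMod m) with hcidef
  have hci : c * ci = 1 := by rw [← hcu, hcidef]; exact_mod_cast cu.mul_inv
  have hic : ci * c = 1 := by rw [mul_comm]; exact hci
  have h1c : IsUnit (1 - c) := by have := hc1.neg; rwa [neg_sub] at this
  obtain ⟨du, hdu⟩ := h1c
  set t1 : ZMod m := ((du⁻¹ : (ZMod m)ˣ) : ZMod m) with ht1def
  have h1t : (1 - c) * t1 = 1 := by rw [← hdu, ht1def]; exact_mod_cast du.mul_inv
  -- Step 1 : row 0 is trivial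
  have h0 : ∀ y : ZMod m, β 0 ((1 - c) * y) = 1 := by
    intro y
    have h := hcoc 0 y 0
    simp only [mul_zero, zero_add, add_zero] at h
    simp only [hnorm, one_mul, mul_one] at h
    exact h.symm
  have hrow0 : ∀ w : ZMod m, β 0 w = 1 := by
    intro w
    have := h0 (t1 * w)
    rwa [show (1 - c) * (t1 * w) = w by
      rw [show (1 - c) * (t1 * w) = ((1 - c) * t1) * w by ring, h1t, one_mul]] at this
  -- Step 2 : scaling identity
  have hS : ∀ y z : ZMod m, β (c * y) (c * z) = β y z := by
    intro y z
    have h := hcoc 0 y z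
    simp only [mul_zero, zero_add] at h
    rw [hrow0, hrow0, one_mul, mul_one] at h
    exact h
  -- Step 3 : the key pointwise identity
  have hLL : ∀ u y w : ZMod m,
      β ((1 - c) * u + y) ((1 - c) * u + w) * β (c * u) w =
        β u (ci * ((1 - c) * y) + w) * β y w := by
    intro u y w
    have e1 : c * (ci * y) = y := by rw [← mul_assoc, hci, one_mul]
    have e2 : c * (ci * w) = w := by rw [← mul_assoc, hci, one_mul]
    have h := hcoc u (ci * y) (ci * w)
    rw [e1, e2] at h
    have e3 : β u (ci * w) = β (c * u) w := by rw [← hS u (ci * w), e2]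
    have e4 : β (ci * y) (ci * w) = β y w := by rw [← hS (ci * y) (ci * w), e1, e2]
    have e5 : (1 - c) * (ci * y) = ci * ((1 - c) * y) := by ring
    rw [e3, e4, e5] at h
    exact h
  -- Step 4 : θ 0 = 1
  have hT0 : theta c ci β 0 = 1 := by
    apply Equiv.ext
    rintro ⟨z, g⟩
    rw [theta_apply]
    simp [hrow0]
  -- Step 5 : the basic group relation
  have basic' : ∀ u y : ZMod m,
      theta c ci β ((1 - c) * u + y) * theta c ci β (c * u) =
        theta c ci β u * theta c ci β y := by
    intro u y
    apply Equiv.ext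
    rintro ⟨z, g⟩
    simp only [Equiv.Perm.mul_apply, theta_apply]
    have a1 : ci * (z + (1 - c) * (c * u)) = (1 - c) * u + ci * z := by
      rw [show ci * (z + (1 - c) * (c * u)) = (ci * c) * ((1 - c) * u) + ci * z by ring,
        hic, one_mul]
    have a2 : ci * (z + (1 - c) * y) = ci * ((1 - c) * y) + ci * z := by ring
    rw [a1, a2, Prod.mk.injEq]
    constructor
    · ring
    · rw [← mul_assoc, ← mul_assoc, hLL u y (ci * z)]
  have basic : ∀ u y : ZMod m,
      theta c ci β ((1 - c) * u + y) =
        theta c ci β u * theta c ci β y * (theta c ci β (c * u))⁻¹ :=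
    fun u y => eq_mul_inv_of_mul_eq (basic' u y)
  -- Step 6 : iteration
  have iter : ∀ (k : ℕ) (u y : ZMod m),
      theta c ci β ((k : ZMod m) * ((1 - c) * u) + y) =
        (theta c ci β u) ^ k * theta c ci β y * ((theta c ci β (c * u)) ^ k)⁻¹ := by
    intro k
    induction k with
    | zero => intro u y; simp
    | succ n ih =>
      intro u y
      rw [show (((n + 1 : ℕ)) : ZMod m) * ((1 - c) * u) + y =
          (1 - c) * u + (((n : ℕ) : ZMod m) * ((1 - c) * u) + y) by push_cast; ring,
        basic u _, ih u y]
      group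
  -- Step 7 : the element F is central
  have hstar : ∀ y' : ZMod m,
      theta c ci β c * theta c ci β y' * (theta c ci β (c * c))⁻¹ =
        (theta c ci β 1) ^ c.val * theta c ci β y' *
          ((theta c ci β c) ^ c.val)⁻¹ := by
    intro y'
    have e2 := iter c.val 1 y'
    rw [show ((c.val : ℕ) : ZMod m) * ((1 - c) * 1) = (1 - c) * c by
      rw [hval]; ring, mul_one] at e2
    rw [← basic c y', e2]
  have hFy : ∀ y' : ZMod m,
      ((theta c ci β c)⁻¹ * (theta c ci β 1) ^ c.val) * theta c ci β y' =
        theta c ci β y' * ((theta c ci β (c * c))⁻¹ * (theta c ci β c) ^ c.val) := by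
    intro y'
    calc ((theta c ci β c)⁻¹ * (theta c ci β 1) ^ c.val) * theta c ci β y'
        = (theta c ci β c)⁻¹ *
            ((theta c ci β 1) ^ c.val * theta c ci β y' *
              ((theta c ci β c) ^ c.val)⁻¹) * (theta c ci β c) ^ c.val := by group
      _ = (theta c ci β c)⁻¹ *
            (theta c ci β c * theta c ci β y' * (theta c ci β (c * c))⁻¹) *
              (theta c ci β c) ^ c.val := by rw [hstar y']
      _ = theta c ci β y' * ((theta c ci β (c * c))⁻¹ * (theta c ci β c) ^ c.val) := by
            group
  have hF0 : (theta c ci β c)⁻¹ * (theta c ci β 1) ^ c.val =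
      (theta c ci β (c * c))⁻¹ * (theta c ci β c) ^ c.val := by
    have := hFy 0
    rwa [hT0, mul_one, one_mul] at this
  have hF : ∀ y' : ZMod m,
      Commute ((theta c ci β c)⁻¹ * (theta c ci β 1) ^ c.val) (theta c ci β y') := by
    intro y'
    show _ * _ = _ * _
    rw [hFy y', ← hF0]
  -- Step 8 : Commute (θ 1) (θ c), then everything commutes
  have hAB : Commute (theta c ci β 1) (theta c ci β c) := by
    have hBF : theta c ci β c =
        (theta c ci β 1) ^ c.val *
          ((theta c ci β c)⁻¹ * (theta c ci β 1) ^ c.val)⁻¹ := by group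
    rw [hBF]
    exact ((Commute.refl _).pow_right c.val).mul_right ((hF 1).symm.inv_right)
  have hexp : ∀ w : ZMod m, theta c ci β w =
      (theta c ci β 1) ^ ((t1 * w).val) * ((theta c ci β c) ^ ((t1 * w).val))⁻¹ := by
    intro w
    have h := iter ((t1 * w).val) 1 0
    simp only [hT0, mul_one] at h
    rw [show (((t1 * w).val : ℕ) : ZMod m) * (1 - c) + 0 = w by
        rw [hval]
        rw [show t1 * w * (1 - c) + 0 = ((1 - c) * t1) * w by ring, h1t, one_mul]] at h
    exact h
  have hcomm : ∀ w w' : ZMod m, Commute (theta c ci β w) (theta c ci β w') := by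
    intro w w'
    rw [hexp w, hexp w']
    have h1 : Commute (theta c ci β 1)
        ((theta c ci β 1) ^ ((t1 * w').val) * ((theta c ci β c) ^ ((t1 * w').val))⁻¹) :=
      ((Commute.refl _).pow_right _).mul_right ((hAB.pow_right _).inv_right)
    have h2 : Commute (theta c ci β c)
        ((theta c ci β 1) ^ ((t1 * w').val) * ((theta c ci β c) ^ ((t1 * w').val))⁻¹) :=
      (hAB.symm.pow_right _).mul_right (((Commute.refl _).pow_right _).inv_right)
    exact (h1.pow_left _).mul_left ((h2.pow_left _).inv_left)
  -- Step 9 : θ is a homomorphism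
  have hom : ∀ a y : ZMod m,
      theta c ci β (a + y) = theta c ci β a * theta c ci β y := by
    intro a y
    have h1 : (1 - c) * (t1 * a) = a := by
      rw [show (1 - c) * (t1 * a) = ((1 - c) * t1) * a by ring, h1t, one_mul]
    have hb : theta c ci β (a + y) =
        theta c ci β (t1 * a) * theta c ci β y * (theta c ci β (c * (t1 * a)))⁻¹ := by
      have := basic (t1 * a) y; rwa [h1] at this
    have hb0 : theta c ci β a =
        theta c ci β (t1 * a) * (theta c ci β (c * (t1 * a)))⁻¹ := by
      have := basic (t1 * a) 0; rwa [h1, add_zero, hT0, mul_one] at this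
    rw [hb, hb0, mul_assoc, (hcomm y (c * (t1 * a))).inv_right.eq, ← mul_assoc]
  -- Step 10 : evaluate at (0, 1)
  have hz : ∀ a y : ZMod m, β a (ci * ((1 - c) * y)) = 1 := by
    intro a y
    have h := congrArg (fun e : Equiv.Perm (ZMod m × G) => (e ((0 : ZMod m), (1 : G))).2)
      (hom a y)
    simp only [Equiv.Perm.mul_apply, theta_apply, mul_zero, zero_add, hnorm, one_mul,
      mul_one] at h
    exact h.symm
  intro x y
  have := hz x (c * (t1 * y))
  rwa [show ci * ((1 - c) * (c * (t1 * y))) = y by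
    rw [show ci * ((1 - c) * (c * (t1 * y))) = (ci * c) * (((1 - c) * t1) * y) by ring,
      hic, h1t, one_mul, one_mul]] at this

/-- Let `X = Q(ℤ_m, λ_c)` be a connected affine quandle over a cyclic group,
with `x ▷ y = (1-c)x + cy` where `c` and `c - 1` are units. Then every
`0`-normalized constant cocycle with values in any group `G` is trivial, and
consequently every constant cocycle is cohomologous to the trivial one, i.e.
`H²_c(X, G) = 1`. -/
theorem cyclic_affine_simply_connected {m : ℕ} (hm : 0 < m) (c : ZMod m)
    (hc : IsUnit c) (hc1 : IsUnit (c - 1)) {G : Type*} [Group G] :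
    (∀ β : ZMod m → ZMod m → G,
      (∀ x y z : ZMod m,
        β ((1 - c) * x + c * y) ((1 - c) * x + c * z) * β x z =
          β x ((1 - c) * y + c * z) * β y z) →
      (∀ x, β x x = 1) →
      (∀ x, β x 0 = 1) →
      ∀ x y, β x y = 1) ∧
    (∀ β : ZMod m → ZMod m → G,
      (∀ x y z : ZMod m,
        β ((1 - c) * x + c * y) ((1 - c) * x + c * z) * β x z =
          β x ((1 - c) * y + c * z) * β y z) →
      (∀ x, β x x = 1) →
      ∃ γ : ZMod m → G, ∀ x y, β x y = γ ((1 - c) * x + c * y) * (γ y)⁻¹) := by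
  constructor
  · intro β hcoc _ hnorm
    exact part1 hm c hc hc1 β hcoc hnorm
  · intro β hcoc hdiag
    haveI : NeZero m := ⟨hm.ne'⟩
    have h1c : IsUnit (1 - c) := by have := hc1.neg; rwa [neg_sub] at this
    obtain ⟨du, hdu⟩ := h1c
    set t1 : ZMod m := ((du⁻¹ : (ZMod m)ˣ) : ZMod m) with ht1def
    have h1t : (1 - c) * t1 = 1 := by rw [← hdu, ht1def]; exact_mod_cast du.mul_inv
    refine ⟨fun t => β (t1 * t) 0, ?_⟩
    intro x y
    set β' : ZMod m → ZMod m → G := fun a b =>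
      (β (t1 * ((1 - c) * a + c * b)) 0)⁻¹ * β a b * β (t1 * b) 0 with hβ'
    have hcoc' : ∀ x y z : ZMod m,
        β' ((1 - c) * x + c * y) ((1 - c) * x + c * z) * β' x z =
          β' x ((1 - c) * y + c * z) * β' y z := by
      intro a b e
      have gen : ∀ u v w₁ w₂ p q r s : G, p * q = r * s →
          u⁻¹ * p * w₁ * (w₁⁻¹ * q * v) = u⁻¹ * r * w₂ * (w₂⁻¹ * s * v) := by
        intro u v w₁ w₂ p q r s hpq
        rw [show u⁻¹ * p * w₁ * (w₁⁻¹ * q * v) = u⁻¹ * (p * q) * v by group,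
          show u⁻¹ * r * w₂ * (w₂⁻¹ * s * v) = u⁻¹ * (r * s) * v by group, hpq]
      simp only [hβ']
      rw [show (1 - c) * ((1 - c) * a + c * b) + c * ((1 - c) * a + c * e) =
          (1 - c) * a + c * ((1 - c) * b + c * e) by ring]
      exact gen _ _ _ _ _ _ _ _ (hcoc a b e)
    have hnorm' : ∀ x, β' x 0 = 1 := by
      intro a
      simp only [hβ']
      rw [mul_zero, add_zero, mul_zero, hdiag 0, mul_one,
        show t1 * ((1 - c) * a) = a by
          rw [show t1 * ((1 - c) * a) = ((1 - c) * t1) * a by ring, h1t, one_mul],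
        inv_mul_cancel]
    have h := part1 hm c hc hc1 β' hcoc' hnorm' x y
    simp only [hβ'] at h
    calc β x y
        = β (t1 * ((1 - c) * x + c * y)) 0 *
            ((β (t1 * ((1 - c) * x + c * y)) 0)⁻¹ * β x y * β (t1 * y) 0) *
              (β (t1 * y) 0)⁻¹ := by group
      _ = β (t1 * ((1 - c) * x + c * y)) 0 * (β (t1 * y) 0)⁻¹ := by rw [h]; group
end

section
/- Let X = Q(Z_2², α) be the doubly transitive quandle of order 4, where α is an automorphism of Z_2² of order 3, and let G be a group. Then every 0-normalized constant quandle cocycle β : X × X → G is of the form β_a for a unique a ∈ G with a² = 1, where β_a takes value 1 on all pairs (x, y) with x = 0 or y = 0 or x = y, and value a on all other pairs. -/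
theorem key_lemma {G : Type*} [Group G]
    (α : AddAut (ZMod 2 × ZMod 2))
    (β : ZMod 2 × ZMod 2 → ZMod 2 × ZMod 2 → G)
    (hcc : ∀ x y z : ZMod 2 × ZMod 2,
      β (x + α (x + y)) (x + α (x + z)) * β x z =
        β x (y + α (y + z)) * β y z)
    (hcq : ∀ x, β x x = 1)
    (hnorm : ∀ x, β x 0 = 1)
    (u v w : ZMod 2 × ZMod 2)
    (hαu : α u = v) (hαv : α v = w) (hαw : α w = u)
    (huv : u + v = w) (hvw : v + w = u) (hwu : w + u = v)
    (hu : u ≠ 0) (hv : v ≠ 0) (hw : w ≠ 0)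
    (huv' : u ≠ v) (huw' : u ≠ w) (hvw' : v ≠ w)
    (hall : ∀ x : ZMod 2 × ZMod 2, x = 0 ∨ x = u ∨ x = v ∨ x = w) :
    ∃! a : G, a ^ 2 = 1 ∧
      ∀ x y : ZMod 2 × ZMod 2,
        β x y = if x = 0 ∨ y = 0 ∨ x = y then 1 else a := by
  have h2 : ∀ x : ZMod 2 × ZMod 2, x + x = 0 := by decide
  have hα0 : α 0 = 0 := map_zero α
  have hvu : v + u = w := (add_comm v u).trans huv
  have hwv : w + v = u := (add_comm w v).trans hvw
  have huw : u + w = v := (add_comm u w).trans hwu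
  -- β 0 (y + α y) = 1
  have e0 : ∀ y : ZMod 2 × ZMod 2, β 0 (y + α y) = 1 := by
    intro y
    have h := hcc 0 y 0
    simp only [zero_add, add_zero, hα0, hnorm, hcq, mul_one, one_mul] at h
    exact h.symm
  have b0u : β 0 u = 1 := by have := e0 v; rwa [hαv, hvw] at this
  have b0v : β 0 v = 1 := by have := e0 w; rwa [hαw, hwu] at this
  have b0w : β 0 w = 1 := by have := e0 u; rwa [hαu, huv] at this
  -- z = x instances
  have ez : ∀ x y : ZMod 2 × ZMod 2,
      β (x + α (x + y)) x = β x (y + α (y + x)) * β y x := by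
    intro x y
    have h := hcc x y x
    simp only [h2, hα0, add_zero, hcq, mul_one] at h
    exact h
  have E1 : (1 : G) = β u w * β v u := by
    have h := ez u v
    simp only [huv, hvu, hαw, h2, b0u] at h
    exact h
  have E4 : (1 : G) = β v u * β w v := by
    have h := ez v w
    simp only [hvw, hwv, hαu, h2, b0v] at h
    exact h
  have E5 : (1 : G) = β w v * β u w := by
    have h := ez w u
    simp only [hwu, huw, hαv, h2, b0w] at h
    exact h
  have E2 : β v u = β w u := by
    have h := ez u w
    simp only [huw, hwu, hαv, h2, hnorm, one_mul] at h
    exact h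
  have E3 : β w v = β u v := by
    have h := ez v u
    simp only [hvu, huv, hαw, h2, hnorm, one_mul] at h
    exact h
  have E6 : β u w = β v w := by
    have h := ez w v
    simp only [hwv, hvw, hαu, h2, hnorm, one_mul] at h
    exact h
  set a := β w v with ha
  have huw_a : β u w = a⁻¹ := by
    have h5 : a * β u w = 1 := E5.symm
    exact eq_inv_of_mul_eq_one_right h5
  have hvu_a : β v u = a := by
    have h1 : β u w * β v u = 1 := E1.symm
    have := eq_inv_of_mul_eq_one_right h1
    rw [this, huw_a, inv_inv]
  have hsq : a ^ 2 = 1 := by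
    rw [pow_two]
    have := E4.symm
    rwa [hvu_a] at this
  have hainv : a⁻¹ = a := by
    rw [inv_eq_iff_mul_eq_one, ← pow_two]; exact hsq
  have huw_a' : β u w = a := by rw [huw_a, hainv]
  have hwu_a : β w u = a := E2 ▸ hvu_a
  have huv_a : β u v = a := E3.symm
  have hvw_a : β v w = a := E6 ▸ huw_a'
  have hwv_a : β w v = a := ha.symm
  refine ⟨a, ⟨hsq, ?_⟩, ?_⟩
  · intro x y
    rcases hall x with rfl | rfl | rfl | rfl <;>
      rcases hall y with rfl | rfl | rfl | rfl <;>
      simp [hnorm, hcq, b0u, b0v, b0w, hu, hv, hw, huv', huw', hvw',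
        Ne.symm huv', Ne.symm huw', Ne.symm hvw', Ne.symm hu, Ne.symm hv, Ne.symm hw, huv_a, huw_a', hvu_a,
        hvw_a, hwu_a, hwv_a]
  · rintro b ⟨-, hb⟩
    have h := hb w v
    rw [if_neg (by simp [hw, hv, Ne.symm hvw'])] at h
    rw [← h, hwv_a]

/-- For the doubly transitive quandle of order 4, `X = Q(ℤ₂², α)` with
`x ▷ y = x + α(x + y)` and `α` of order 3: every `0`-normalized constant
cocycle `β : X × X → G` equals `β_a` for a unique `a ∈ G` with `a² = 1`,
where `β_a` is `1` on pairs with `x = 0`, `y = 0` or `x = y`, and `a` otherwise. -/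
theorem order4_normalized_cocycles {G : Type*} [Group G]
    (α : AddAut (ZMod 2 × ZMod 2)) (hα : addOrderOf α = 3)
    (β : ZMod 2 × ZMod 2 → ZMod 2 × ZMod 2 → G)
    (hcc : ∀ x y z : ZMod 2 × ZMod 2,
      β (x + α (x + y)) (x + α (x + z)) * β x z =
        β x (y + α (y + z)) * β y z)
    (hcq : ∀ x, β x x = 1)
    (hnorm : ∀ x, β x 0 = 1) :
    ∃! a : G, a ^ 2 = 1 ∧
      ∀ x y : ZMod 2 × ZMod 2,
        β x y = if x = 0 ∨ y = 0 ∨ x = y then 1 else a := by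
  have hp : 3 • α = 0 := by rw [← hα]; exact addOrderOf_nsmul_eq_zero α
  have h3 : ∀ x, α (α (α x)) = x := by
    intro x
    have h : (3 • α) x = (0 : AddAut (ZMod 2 × ZMod 2)) x := by rw [hp]
    simpa [succ_nsmul, AddAut.add_apply] using h
  have hne1 : α ≠ 0 := by
    intro h
    rw [h, addOrderOf_zero] at hα
    exact absurd hα (by norm_num)
  have hall4 : ∀ x : ZMod 2 × ZMod 2,
      x = 0 ∨ x = (1, 0) ∨ x = (0, 1) ∨ x = (1, 1) := by decide
  rcases hall4 (α (1, 0)) with h1 | h1 | h1 | h1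
  · exact absurd (α.injective (h1.trans (map_zero α).symm)) (by decide)
  · -- α fixes (1,0): contradiction
    exfalso
    rcases hall4 (α (0, 1)) with h2 | h2 | h2 | h2
    · exact absurd (α.injective (h2.trans (map_zero α).symm)) (by decide)
    · exact absurd (α.injective (h2.trans h1.symm)) (by decide)
    · -- α = 1
      apply hne1
      have hfix : ∀ x, α x = x := by
        intro x
        rcases hall4 x with rfl | rfl | rfl | rfl
        · exact map_zero α
        · exact h1
        · exact h2
        · have e : ((1, 1) : ZMod 2 × ZMod 2) = (1, 0) + (0, 1) := by decide
          rw [e, map_add, h1, h2]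
      exact AddEquiv.ext fun x => (hfix x).trans rfl
    · have ha11 : α (1, 1) = (0, 1) := by
        have e : ((1, 1) : ZMod 2 × ZMod 2) = (1, 0) + (0, 1) := by decide
        rw [e, map_add, h1, h2]; decide
      have h := h3 (0, 1)
      rw [h2, ha11, h2] at h
      exact absurd h (by decide)
  · -- α (1,0) = (0,1)
    rcases hall4 (α (0, 1)) with h2 | h2 | h2 | h2
    · exact absurd (α.injective (h2.trans (map_zero α).symm)) (by decide)
    · exfalso
      have h := h3 (1, 0)
      rw [h1, h2, h1] at h
      exact absurd h (by decide)
    · exact absurd (α.injective (h2.trans h1.symm)) (by decide)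
    · have hαw : α (1, 1) = (1, 0) := by
        have e : ((1, 1) : ZMod 2 × ZMod 2) = (1, 0) + (0, 1) := by decide
        rw [e, map_add, h1, h2]; decide
      exact key_lemma α β hcc hcq hnorm (1, 0) (0, 1) (1, 1) h1 h2 hαw
        (by decide) (by decide) (by decide) (by decide) (by decide) (by decide)
        (by decide) (by decide) (by decide) (by decide)
  · -- α (1,0) = (1,1)
    rcases hall4 (α (1, 1)) with h2 | h2 | h2 | h2
    · exact absurd (α.injective (h2.trans (map_zero α).symm)) (by decide)
    · exfalso
      have h := h3 (1, 0)
      rw [h1, h2, h1] at h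
      exact absurd h (by decide)
    · have hαw : α (0, 1) = (1, 0) := by
        have e : ((0, 1) : ZMod 2 × ZMod 2) = (1, 0) + (1, 1) := by decide
        rw [e, map_add, h1, h2]; decide
      exact key_lemma α β hcc hcq hnorm (1, 0) (1, 1) (0, 1) h1 h2 hαw
        (by decide) (by decide) (by decide) (by decide) (by decide) (by decide)
        (by decide) (by decide) (by decide) (by decide)
    · exact absurd (α.injective (h2.trans h1.symm)) (by decide)
end
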